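/- Let C be a ribbon Ab-category with K = End(1) a field, J an ambidextrous object, and V ∈ I_J. If the modified dimension d_J(V) ≠ 0, then I_V = I_J. -/

import Mathlib

open CategoryTheory MonoidalCategory

universe v u

variable {C : Type u} [Category.{v} C] [MonoidalCategory C]
  [BraidedCategory C] [RightRigidCategory C]

/-- A twist, making `C` into a ribbon category. -/
class RibbonTwist (C : Type u) [Category.{v} C] [MonoidalCategory C]
    [BraidedCategory C] [RightRigidCategory C] where
  θ : ∀ V : C, V ⟶ V
  θ_isIso : ∀ V : C, IsIso (θ V)
  θ_natural : ∀ {V W : C} (f : V ⟶ W), f ≫ θ W = θ V ≫ f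
  θ_tensor : ∀ V W : C, θ (V ⊗ W) = (θ V ⊗ₘ θ W) ≫ (β_ V W).hom ≫ (β_ W V).hom
  θ_dual : ∀ V : C, θ (Vᘁ) = (θ V)ᘁ

variable [RibbonTwist C]

open RibbonTwist

/-- The morphism `b'_V : 𝟙 ⟶ V* ⊗ V`. -/
noncomputable def coev' (V : C) : 𝟙_ C ⟶ Vᘁ ⊗ V :=
  η_ V (Vᘁ) ≫ (β_ V (Vᘁ)).hom ≫ ((Vᘁ) ◁ θ V)

/-- The morphism `d'_V : V ⊗ V* ⟶ 𝟙`. -/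
noncomputable def ev' (V : C) : V ⊗ (Vᘁ) ⟶ 𝟙_ C :=
  (θ V ▷ (Vᘁ)) ≫ (β_ V (Vᘁ)).hom ≫ ε_ V (Vᘁ)

/-- The left partial trace `tr_L`. -/
noncomputable def trL {V W : C} (f : V ⊗ W ⟶ V ⊗ W) : W ⟶ W :=
  (λ_ W).inv ≫ (coev' V ▷ W) ≫ (α_ _ _ _).hom ≫ ((Vᘁ) ◁ f) ≫
    (α_ _ _ _).inv ≫ ((ε_ V (Vᘁ)) ▷ W) ≫ (λ_ W).hom

/-- The right partial trace `tr_R`. -/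
noncomputable def trR {V W : C} (f : V ⊗ W ⟶ V ⊗ W) : V ⟶ V :=
  (ρ_ V).inv ≫ (V ◁ η_ W (Wᘁ)) ≫ (α_ _ _ _).inv ≫ (f ▷ (Wᘁ)) ≫
    (α_ _ _ _).hom ≫ (V ◁ ev' W) ≫ (ρ_ V).hom

/-- The categorical trace. -/
noncomputable def trC {V : C} (f : V ⟶ V) : 𝟙_ C ⟶ 𝟙_ C :=
  η_ V (Vᘁ) ≫ (f ▷ (Vᘁ)) ≫ ev' V

/-- `InI V U` : `U` belongs to the ideal `I_V` generated by `V`, i.e. `U` is a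
retract of `V ⊗ W` for some `W`. -/
def InI (V U : C) : Prop :=
  ∃ (W : C) (α : U ⟶ V ⊗ W) (β : V ⊗ W ⟶ U), α ≫ β = 𝟙 U

/-- A full subcategory (given by a predicate on objects) is an ideal if it is closed
under tensoring with arbitrary objects and under retracts. -/
structure IsIdeal (P : C → Prop) : Prop where
  tensor_mem : ∀ {V : C}, P V → ∀ W : C, P (V ⊗ W)
  retract_mem : ∀ {V W : C}, P V → ∀ (f : W ⟶ V) (g : V ⟶ W), f ≫ g = 𝟙 W → P W


/-- An ambidextrous object: `J` is absolutely indecomposable, encoded by the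
canonical projection `χ : End(J) → End(𝟙) = K` (a surjective ring homomorphism
whose kernel, the radical, consists of nilpotent elements), and `χ` is an
ambidextrous trace on `J`. -/
structure AmbiObj [Preadditive C] (J : C) where
  χ : End J →+* End (𝟙_ C)
  surjective : Function.Surjective χ
  nilpotent_ker : ∀ f : End J, χ f = 0 → IsNilpotent f
  ambi : ∀ f : J ⊗ J ⟶ J ⊗ J, χ (trL f) = χ (trR f)

omit [BraidedCategory C] [RightRigidCategory C] [RibbonTwist C] in
/-- Transitivity helper: if `B` is a retract of `A ⊗ Y`, then anything in `I_B` is in `I_A`. -/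
lemma InI.of_retract {A B : C} {Y : C} (a : B ⟶ A ⊗ Y) (b : A ⊗ Y ⟶ B)
    (h : a ≫ b = 𝟙 B) {U : C} (hU : InI B U) : InI A U := by
  obtain ⟨X, α₁, β₁, hX⟩ := hU
  refine ⟨Y ⊗ X, α₁ ≫ (a ▷ X) ≫ (α_ A Y X).hom, (α_ A Y X).inv ≫ (b ▷ X) ≫ β₁, ?_⟩
  simp only [Category.assoc, Iso.hom_inv_id_assoc]
  rw [← Category.assoc (a ▷ X), ← comp_whiskerRight, h, id_whiskerRight,
    Category.id_comp, hX]

lemma isUnit_of_chi_ne_zero [Preadditive C] {J : C} (hK : IsField (End (𝟙_ C)))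
    (A : AmbiObj J) (f : End J) (hf : A.χ f ≠ 0) : IsUnit f := by
  obtain ⟨c, hc⟩ := hK.mul_inv_cancel hf
  obtain ⟨g, hg⟩ := A.surjective c
  have h1 : IsUnit (g * f) := by
    have h0 : A.χ (1 - g * f) = 0 := by
      rw [map_sub, map_one, map_mul, hg, hK.mul_comm c, hc, sub_self]
    have := IsNilpotent.isUnit_one_sub (A.nilpotent_ker _ h0)
    simpa using this
  have h2 : IsUnit (f * g) := by
    have h0 : A.χ (1 - f * g) = 0 := by
      rw [map_sub, map_one, map_mul, hg, hc, sub_self]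
    have := IsNilpotent.isUnit_one_sub (A.nilpotent_ker _ h0)
    simpa using this
  obtain ⟨l, hl⟩ := h1.exists_left_inv
  obtain ⟨r, hr⟩ := h2.exists_right_inv
  have hlf : (l * g) * f = 1 := by rw [mul_assoc]; exact hl
  have hfr : f * (g * r) = 1 := by rw [← mul_assoc]; exact hr
  have heq : l * g = g * r := by
    calc l * g = (l * g) * (f * (g * r)) := by rw [hfr, mul_one]
    _ = ((l * g) * f) * (g * r) := by simp only [mul_assoc]
    _ = g * r := by rw [hlf, one_mul]
  exact ⟨⟨f, g * r, hfr, by rw [← heq]; exact hlf⟩, rfl⟩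


theorem stmt10 [Preadditive C] (hK : IsField (End (𝟙_ C))) (J : C) (A : AmbiObj J)
    (V W : C) (α : V ⟶ J ⊗ W) (β : J ⊗ W ⟶ V) (hαβ : α ≫ β = 𝟙 V)
    (hd : A.χ (trR (β ≫ α)) ≠ 0) :
    ∀ U : C, InI V U ↔ InI J U  := by
  -- `f = trR (β ≫ α)` is a unit in `End J`.
  have hu : IsUnit (show End J from trR (β ≫ α)) := isUnit_of_chi_ne_zero hK A _ hd
  obtain ⟨u, hu'⟩ := hu
  -- `J` is a retract of `V ⊗ Wᘁ`.
  set finv : J ⟶ J := ((u⁻¹ : (End J)ˣ) : End J) with hfinv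
  have hJ : (finv ≫ (ρ_ J).inv ≫ (J ◁ η_ W (Wᘁ)) ≫ (α_ J W (Wᘁ)).inv ≫ (β ▷ (Wᘁ)))
      ≫ ((α ▷ (Wᘁ)) ≫ (α_ J W (Wᘁ)).hom ≫ (J ◁ ev' W) ≫ (ρ_ J).hom) = 𝟙 J := by
    have hsplit : finv ≫ trR (β ≫ α) = 𝟙 J := by
      have := u.mul_inv
      rw [hu'] at this
      simpa [End.mul_def, hfinv] using this
    calc (finv ≫ (ρ_ J).inv ≫ (J ◁ η_ W (Wᘁ)) ≫ (α_ J W (Wᘁ)).inv ≫ (β ▷ (Wᘁ)))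
        ≫ ((α ▷ (Wᘁ)) ≫ (α_ J W (Wᘁ)).hom ≫ (J ◁ ev' W) ≫ (ρ_ J).hom)
        = finv ≫ trR (β ≫ α) := by
          simp only [trR, comp_whiskerRight, Category.assoc]
    _ = 𝟙 J := hsplit
  intro U
  constructor
  · exact fun h => InI.of_retract α β hαβ h
  · exact fun h => InI.of_retract _ _ hJ h
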